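/- Let |φ₁⟩,…,|φ₂₄⟩ ∈ ℂ³⊗ℂ⁹ be defined by |φ_{1,2}⟩=|1,0⟩±|2,1⟩, |φ_{3,4}⟩=|1,1⟩±|2,0⟩, |φ_{5,6}⟩=|1,2⟩±|2,3⟩, |φ_{7,8}⟩=|1,3⟩±|2,2⟩, |φ_{9,10}⟩=|2,5⟩±|2,7⟩, |φ_{11,12}⟩=|2,4⟩±|2,6⟩, |φ_{13,14}⟩=|0,5⟩±|1,6⟩, |φ_{15,16}⟩=|0,6⟩±|1,5⟩, |φ_{17,18}⟩=|0,7⟩±|1,8⟩, |φ_{19,20}⟩=|0,8⟩±|1,7⟩, |φ_{21,22}⟩=|0,1⟩±|0,3⟩, |φ_{23,24}⟩=|0,2⟩±|0,4⟩. If E is any 3×3 complex Hermitian matrix satisfying ⟨φ_k|(E⊗I₉)|φ_l⟩ = 0 for all k ≠ l, then E is a scalar multiple of the 3×3 identity. -/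

import Mathlib

open Finset

/-- standard basis vector `e_i ⊗ e_j` of `ℂ³ ⊗ ℂ⁹`. -/
def ket39 (i : Fin 3) (j : Fin 9) : Fin 3 × Fin 9 → ℂ := fun p => if p = (i, j) then 1 else 0

/-- the twelve pairs `(u, v)` of basis vectors of the `3 × 9` grid construction. -/
def gridPair : Fin 12 → (Fin 3 × Fin 9) × (Fin 3 × Fin 9)
  | 0 => ((1,0),(2,1))
  | 1 => ((1,1),(2,0))
  | 2 => ((1,2),(2,3))
  | 3 => ((1,3),(2,2))
  | 4 => ((2,5),(2,7))
  | 5 => ((2,4),(2,6))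
  | 6 => ((0,5),(1,6))
  | 7 => ((0,6),(1,5))
  | 8 => ((0,7),(1,8))
  | 9 => ((0,8),(1,7))
  | 10 => ((0,1),(0,3))
  | 11 => ((0,2),(0,4))

/-- the 24 states `|φ_k⟩`: for the pair `m` the two states `|u⟩ ± |v⟩`. -/
def gridState (m : Fin 12) (ε : Fin 2) : Fin 3 × Fin 9 → ℂ :=
  ket39 (gridPair m).1.1 (gridPair m).1.2
    + (if ε = 0 then (1 : ℂ) else -1) • ket39 (gridPair m).2.1 (gridPair m).2.2

/-- `(E ⊗ I₉) v` for `E` acting on the first tensor factor. -/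
noncomputable def actA (E : Matrix (Fin 3) (Fin 3) ℂ) (v : Fin 3 × Fin 9 → ℂ) :
    Fin 3 × Fin 9 → ℂ := fun p => ∑ i : Fin 3, E p.1 i * v (i, p.2)

theorem grid_first_party_povm_trivial (E : Matrix (Fin 3) (Fin 3) ℂ)
    (hE : E.IsHermitian)
    (h : ∀ m ε m' ε', (m, ε) ≠ (m', ε') →
      ∑ p : Fin 3 × Fin 9,
        (starRingEnd ℂ) (gridState m ε p) * actA E (gridState m' ε') p = 0) :
    ∃ c : ℂ, E = c • (1 : Matrix (Fin 3) (Fin 3) ℂ) := by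
  have h1 := h 0 0 1 0 (by decide)
  have h2 := h 0 0 1 1 (by decide)
  have h3 := h 6 0 7 0 (by decide)
  have h4 := h 6 0 7 1 (by decide)
  have h5 := h 4 0 6 0 (by decide)
  have h6 := h 6 0 4 0 (by decide)
  have h7 := h 0 0 0 1 (by decide)
  have h8 := h 6 0 6 1 (by decide)
  simp (config := { decide := true }) [gridState, gridPair, actA, ket39, Fin.sum_univ_succ, Fintype.sum_prod_type,
    Prod.ext_iff, Fin.ext_iff, -Fin.val_eq_zero_iff] at h1 h2 h3 h4 h5 h6 h7 h8
  refine ⟨E 0 0, ?_⟩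
  ext i j
  fin_cases i <;> fin_cases j <;> simp [Matrix.one_apply]
  · linear_combination (h3 - h4) / 2
  · exact h6
  · linear_combination (h3 + h4) / 2
  · linear_combination -h8
  · linear_combination (h1 - h2) / 2
  · exact h5
  · linear_combination (h1 + h2) / 2
  · linear_combination -h7 - h8
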